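/- With D the family of translation-invariant metrics ρ on ℝ satisfying ρ(0,x) ≤ |x|, let δ_n := sup{ρ ∈ D : ρ(1/k) ≤ 1/(k+1) for all k ≤ n} and write δ_n(x) := δ_n(0,x). Then for x ∈ (0, 1/n), δ_n(x) = min{x, 1/(n+1) − x + 1/n}; consequently, if p ∈ (0,1/n) and δ_n(p) ≤ 1/(n+1), then p ≤ 1/(n+1). -/

import Mathlib

open Finset
open Finset

noncomputable def gval (n : ℕ) (m : ℕ → ℤ) (t : ℝ) : ℝ :=
  (∑ k ∈ Finset.Icc 1 n, |(m k : ℝ)| / ((k : ℝ) + 1)) +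
    |t - ∑ k ∈ Finset.Icc 1 n, (m k : ℝ) / (k : ℝ)|

noncomputable def gfun (n : ℕ) (t : ℝ) : ℝ :=
  sInf (Set.range fun m : ℕ → ℤ => gval n m t)

lemma gval_nonneg (n : ℕ) (m : ℕ → ℤ) (t : ℝ) : 0 ≤ gval n m t :=
  add_nonneg (Finset.sum_nonneg fun k _ => div_nonneg (abs_nonneg _) (by positivity))
    (abs_nonneg _)

lemma grange_nonempty (n : ℕ) (t : ℝ) :
    (Set.range fun m : ℕ → ℤ => gval n m t).Nonempty := ⟨_, ⟨fun _ => 0, rfl⟩⟩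

lemma grange_bdd (n : ℕ) (t : ℝ) :
    BddBelow (Set.range fun m : ℕ → ℤ => gval n m t) := by
  refine ⟨0, ?_⟩
  rintro y ⟨m, rfl⟩
  exact gval_nonneg n m t

lemma gfun_le (n : ℕ) (m : ℕ → ℤ) (t : ℝ) : gfun n t ≤ gval n m t :=
  csInf_le (grange_bdd n t) ⟨m, rfl⟩

lemma gval_zero (n : ℕ) (t : ℝ) : gval n (fun _ => 0) t = |t| := by
  simp [gval]

lemma gfun_le_abs (n : ℕ) (t : ℝ) : gfun n t ≤ |t| := by
  have := gfun_le n (fun _ => 0) t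
  rwa [gval_zero] at this

lemma gfun_nonneg (n : ℕ) (t : ℝ) : 0 ≤ gfun n t := by
  apply le_csInf (grange_nonempty n t)
  rintro b ⟨m, rfl⟩
  exact gval_nonneg n m t

lemma gval_add (n : ℕ) (m m' : ℕ → ℤ) (s t : ℝ) :
    gval n (m + m') (s + t) ≤ gval n m s + gval n m' t := by
  unfold gval
  have A : ∑ k ∈ Icc 1 n, |((m + m') k : ℝ)| / ((k : ℝ) + 1)
      ≤ (∑ k ∈ Icc 1 n, |(m k : ℝ)| / ((k : ℝ) + 1))
        + ∑ k ∈ Icc 1 n, |(m' k : ℝ)| / ((k : ℝ) + 1) := by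
    rw [← Finset.sum_add_distrib]
    apply Finset.sum_le_sum
    intro k _
    rw [← add_div]
    gcongr
    simp only [Pi.add_apply]
    push_cast
    exact abs_add_le _ _
  have hS : ∑ k ∈ Icc 1 n, ((m + m') k : ℝ) / (k : ℝ)
      = (∑ k ∈ Icc 1 n, (m k : ℝ) / (k : ℝ)) + ∑ k ∈ Icc 1 n, (m' k : ℝ) / (k : ℝ) := by
    rw [← Finset.sum_add_distrib]
    apply Finset.sum_congr rfl
    intro k _
    simp only [Pi.add_apply]
    push_cast
    ring
  have B : |s + t - ∑ k ∈ Icc 1 n, ((m + m') k : ℝ) / (k : ℝ)|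
      ≤ |s - ∑ k ∈ Icc 1 n, (m k : ℝ) / (k : ℝ)|
        + |t - ∑ k ∈ Icc 1 n, (m' k : ℝ) / (k : ℝ)| := by
    rw [hS, show s + t - ((∑ k ∈ Icc 1 n, (m k : ℝ) / (k : ℝ))
        + ∑ k ∈ Icc 1 n, (m' k : ℝ) / (k : ℝ))
      = (s - ∑ k ∈ Icc 1 n, (m k : ℝ) / (k : ℝ))
        + (t - ∑ k ∈ Icc 1 n, (m' k : ℝ) / (k : ℝ)) by ring]
    exact abs_add_le _ _
  linarith

lemma gfun_subadd (n : ℕ) (s t : ℝ) : gfun n (s + t) ≤ gfun n s + gfun n t := by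
  have h1 : ∀ b ∈ Set.range (fun m : ℕ → ℤ => gval n m t),
      gfun n (s + t) - b ≤ gfun n s := by
    rintro b ⟨m', rfl⟩
    apply le_csInf (grange_nonempty n s)
    rintro a ⟨m, rfl⟩
    have h := gval_add n m m' s t
    have h2 := gfun_le n (m + m') (s + t)
    linarith
  have h2 : gfun n (s + t) - gfun n s ≤ gfun n t := by
    apply le_csInf (grange_nonempty n t)
    rintro b hb
    have := h1 b hb
    linarith
  linarith

lemma gval_neg (n : ℕ) (m : ℕ → ℤ) (t : ℝ) :
    gval n (fun k => -(m k)) t = gval n m (-t) := by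
  unfold gval
  have h1 : ∑ k ∈ Icc 1 n, |((-(m k) : ℤ) : ℝ)| / ((k : ℝ) + 1)
      = ∑ k ∈ Icc 1 n, |(m k : ℝ)| / ((k : ℝ) + 1) := by
    apply Finset.sum_congr rfl
    intro k _
    push_cast
    rw [abs_neg]
  have h2 : ∑ k ∈ Icc 1 n, ((-(m k) : ℤ) : ℝ) / (k : ℝ)
      = -∑ k ∈ Icc 1 n, (m k : ℝ) / (k : ℝ) := by
    rw [← Finset.sum_neg_distrib]
    apply Finset.sum_congr rfl
    intro k _
    push_cast
    ring
  rw [h1, h2]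
  congr 1
  rw [show t - -(∑ k ∈ Icc 1 n, (m k : ℝ) / (k : ℝ))
    = -(-t - ∑ k ∈ Icc 1 n, (m k : ℝ) / (k : ℝ)) by ring, abs_neg]

lemma gfun_neg (n : ℕ) (t : ℝ) : gfun n (-t) = gfun n t := by
  unfold gfun
  congr 1
  ext y
  simp only [Set.mem_range]
  constructor
  · rintro ⟨m, rfl⟩
    refine ⟨fun k => -(m k), ?_⟩
    rw [gval_neg]
  · rintro ⟨m, rfl⟩
    refine ⟨fun k => -(m k), ?_⟩
    rw [gval_neg, neg_neg]

lemma gfun_lb (n : ℕ) (t : ℝ) : min |t| (1 / ((n : ℝ) + 1)) ≤ gfun n t := by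
  apply le_csInf (grange_nonempty n t)
  rintro b ⟨m, rfl⟩
  show |t| ⊓ (1 / ((n:ℝ)+1)) ≤ gval n m t
  by_cases h : ∀ k ∈ Icc 1 n, m k = 0
  · have heq : gval n m t = |t| := by
      unfold gval
      rw [Finset.sum_eq_zero (fun k hk => by simp [h k hk]),
        Finset.sum_eq_zero (fun k hk => by simp [h k hk])]
      simp
    rw [heq]
    exact min_le_left _ _
  · push_neg at h
    obtain ⟨j, hj, hjm⟩ := h
    have hj' := Finset.mem_Icc.mp hj
    refine le_trans (min_le_right _ _) ?_
    unfold gval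
    have habs : (1:ℝ) ≤ |(m j : ℝ)| := by
      have := Int.one_le_abs (by omega : m j ≠ 0)
      exact_mod_cast this
    have hjn : ((j : ℝ)) + 1 ≤ (n : ℝ) + 1 := by
      have : (j : ℝ) ≤ (n : ℝ) := by exact_mod_cast hj'.2
      linarith
    have h1 : 1 / ((n : ℝ) + 1) ≤ |(m j : ℝ)| / ((j : ℝ) + 1) := by
      calc 1 / ((n : ℝ) + 1) ≤ 1 / ((j : ℝ) + 1) := by
            apply one_div_le_one_div_of_le (by positivity) hjn
        _ ≤ |(m j : ℝ)| / ((j : ℝ) + 1) := by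
            gcongr
    have h2 : |(m j : ℝ)| / ((j : ℝ) + 1) ≤ ∑ k ∈ Icc 1 n, |(m k : ℝ)| / ((k : ℝ) + 1) :=
      Finset.single_le_sum (f := fun k => |(m k : ℝ)| / ((k : ℝ) + 1))
        (fun k _ => div_nonneg (abs_nonneg _) (by positivity)) hj
    have h3 := abs_nonneg (t - ∑ k ∈ Icc 1 n, (m k : ℝ) / (k : ℝ))
    linarith

lemma gval_single (n j : ℕ) (hj : j ∈ Icc 1 n) (c : ℤ) (t : ℝ) :
    gval n (fun i => if i = j then c else 0) t
      = |(c : ℝ)| / ((j : ℝ) + 1) + |t - (c : ℝ) / (j : ℝ)| := by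
  unfold gval
  have h1 : ∑ k ∈ Icc 1 n, |((if k = j then c else 0 : ℤ) : ℝ)| / ((k : ℝ) + 1)
      = |(c : ℝ)| / ((j : ℝ) + 1) := by
    rw [Finset.sum_congr rfl (fun k _ => show
        |((if k = j then c else 0 : ℤ) : ℝ)| / ((k : ℝ) + 1)
          = if k = j then |(c : ℝ)| / ((k : ℝ) + 1) else 0 by split <;> simp),
      Finset.sum_ite_eq' (Icc 1 n) j (fun k => |(c : ℝ)| / ((k : ℝ) + 1)), if_pos hj]
  have h2 : ∑ k ∈ Icc 1 n, ((if k = j then c else 0 : ℤ) : ℝ) / (k : ℝ)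
      = (c : ℝ) / (j : ℝ) := by
    rw [Finset.sum_congr rfl (fun k _ => show
        ((if k = j then c else 0 : ℤ) : ℝ) / (k : ℝ)
          = if k = j then (c : ℝ) / (k : ℝ) else 0 by split <;> simp),
      Finset.sum_ite_eq' (Icc 1 n) j (fun k => (c : ℝ) / (k : ℝ)), if_pos hj]
  rw [h1, h2]

lemma gfun_constraint (n k : ℕ) (hk1 : 0 < k) (hkn : k ≤ n) :
    gfun n (1 / (k : ℝ)) ≤ 1 / ((k : ℝ) + 1) := by
  have hmem : k ∈ Icc 1 n := Finset.mem_Icc.mpr ⟨hk1, hkn⟩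
  have h := gfun_le n (fun i => if i = k then 1 else 0) (1 / (k : ℝ))
  rw [gval_single n k hmem 1 (1 / (k : ℝ))] at h
  simpa [one_div] using h

lemma sum_nat_eq_one {s : Finset ℕ} {f : ℕ → ℕ} (h : ∑ k ∈ s, f k = 1) :
    ∃ j ∈ s, f j = 1 ∧ ∀ k ∈ s, k ≠ j → f k = 0 := by
  obtain ⟨j, hj, hfj⟩ : ∃ j ∈ s, f j ≠ 0 := by
    by_contra hc
    push_neg at hc
    rw [Finset.sum_eq_zero hc] at h
    exact one_ne_zero h.symm
  rw [← Finset.add_sum_erase s f hj] at h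
  have hfj1 : f j = 1 := by omega
  have hrest : ∑ k ∈ s.erase j, f k = 0 := by omega
  refine ⟨j, hj, hfj1, fun k hk hne => ?_⟩
  have := (Finset.sum_eq_zero_iff.mp hrest) k (Finset.mem_erase.mpr ⟨hne, hk⟩)
  exact this

lemma gval_key (n : ℕ) (hn : 0 < n) (x : ℝ) (hx0 : 0 < x) (hx1 : x < 1 / (n : ℝ))
    (m : ℕ → ℤ) :
    min x (1 / ((n : ℝ) + 1) - x + 1 / (n : ℝ)) ≤ gval n m x := by
  have hn1 : (1 : ℝ) ≤ (n : ℝ) := by exact_mod_cast hn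
  have hnpos : (0 : ℝ) < (n : ℝ) := by linarith
  set M := ∑ k ∈ Icc 1 n, (m k).natAbs with hM
  rcases Nat.lt_or_ge M 2 with hM2 | hM2
  · interval_cases M
    · -- all zero
      have hz : ∀ k ∈ Icc 1 n, m k = 0 := by
        intro k hk
        have := (Finset.sum_eq_zero_iff.mp hM.symm) k hk
        omega
      have heq : gval n m x = x := by
        unfold gval
        rw [Finset.sum_eq_zero (fun k hk => by simp [hz k hk]),
          Finset.sum_eq_zero (fun k hk => by simp [hz k hk])]
        simp [abs_of_pos hx0]
      rw [heq]
      exact min_le_left _ _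
    · -- exactly one ±1
      obtain ⟨j, hj, hj1, hj0⟩ := sum_nat_eq_one hM.symm
      have hjIcc := Finset.mem_Icc.mp hj
      have hjpos : (0 : ℝ) < (j : ℝ) := by exact_mod_cast hjIcc.1
      have hjn : (j : ℝ) ≤ (n : ℝ) := by exact_mod_cast hjIcc.2
      have hmz : ∀ k ∈ Icc 1 n, k ≠ j → m k = 0 := by
        intro k hk hne
        have := hj0 k hk hne
        omega
      have heq : gval n m x = |(m j : ℝ)| / ((j : ℝ) + 1) + |x - (m j : ℝ) / (j : ℝ)| := by
        unfold gval
        rw [Finset.sum_eq_single_of_mem j hj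
            (fun k hk hne => by simp [hmz k hk hne]),
          Finset.sum_eq_single_of_mem j hj
            (fun k hk hne => by simp [hmz k hk hne])]
      rw [heq]
      have hjcase : m j = 1 ∨ m j = -1 := by omega
      have h1j : 1 / (n : ℝ) ≤ 1 / (j : ℝ) := one_div_le_one_div_of_le hjpos hjn
      have h1j' : 1 / ((n : ℝ) + 1) ≤ 1 / ((j : ℝ) + 1) :=
        one_div_le_one_div_of_le (by linarith) (by linarith)
      rcases hjcase with h | h
      · rw [h]
        have hxj : x < 1 / (j : ℝ) := lt_of_lt_of_le hx1 h1j
        have : |x - (1 : ℝ) / (j : ℝ)| = 1 / (j : ℝ) - x := by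
          rw [abs_of_nonpos (by linarith)]; ring
        push_cast
        rw [this, abs_one]
        refine le_trans (min_le_right _ _) ?_
        linarith
      · rw [h]
        have hpos : (0:ℝ) ≤ 1 / (j:ℝ) := by positivity
        have hne : (-1 : ℝ) / (j : ℝ) = -(1 / (j : ℝ)) := by ring
        have : |x - (-1 : ℝ) / (j : ℝ)| = x + 1 / (j : ℝ) := by
          rw [hne, abs_of_nonneg (by linarith)]
          ring
        push_cast
        rw [this]
        refine le_trans (min_le_left _ _) ?_
        have : (0:ℝ) ≤ |(-1 : ℝ)| / ((j : ℝ) + 1) := by positivity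
        nlinarith [one_div_pos.mpr hjpos]
  · -- M ≥ 2
    have hc : (2 : ℝ) / ((n : ℝ) + 1)
        ≤ ∑ k ∈ Icc 1 n, |(m k : ℝ)| / ((k : ℝ) + 1) := by
      have step1 : ((M : ℝ)) / ((n : ℝ) + 1)
          ≤ ∑ k ∈ Icc 1 n, |(m k : ℝ)| / ((k : ℝ) + 1) := by
        rw [hM]
        push_cast
        rw [Finset.sum_div]
        apply Finset.sum_le_sum
        intro k hk
        have hk' := Finset.mem_Icc.mp hk
        have h1 : |(m k : ℝ)| = ((m k).natAbs : ℝ) := by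
          simp [Nat.cast_natAbs]
        rw [h1]
        gcongr
        · exact_mod_cast hk'.2
      have hM2' : (2 : ℝ) ≤ (M : ℝ) := by exact_mod_cast hM2
      have : (2 : ℝ) / ((n : ℝ) + 1) ≤ ((M : ℝ)) / ((n : ℝ) + 1) := by gcongr
      linarith
    have habs := abs_nonneg (x - ∑ k ∈ Icc 1 n, (m k : ℝ) / (k : ℝ))
    have hmin : min x (1 / ((n : ℝ) + 1) - x + 1 / (n : ℝ)) ≤ (2 : ℝ) / ((n : ℝ) + 1) := by
      have h1 : min x (1 / ((n : ℝ) + 1) - x + 1 / (n : ℝ))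
          ≤ (x + (1 / ((n : ℝ) + 1) - x + 1 / (n : ℝ))) / 2 := by
        have := min_le_left x (1 / ((n : ℝ) + 1) - x + 1 / (n : ℝ))
        have := min_le_right x (1 / ((n : ℝ) + 1) - x + 1 / (n : ℝ))
        linarith
      have h2 : (1 / ((n : ℝ) + 1) + 1 / (n : ℝ)) / 2 ≤ (2 : ℝ) / ((n : ℝ) + 1) := by
        have key : 1 / (n : ℝ) ≤ 3 / ((n : ℝ) + 1) := by
          rw [div_le_div_iff₀ hnpos (by linarith)]
          linarith
        have e1 : (3 : ℝ) / ((n : ℝ) + 1) = 3 * (1 / ((n : ℝ) + 1)) := by ring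
        have e2 : (2 : ℝ) / ((n : ℝ) + 1) = 2 * (1 / ((n : ℝ) + 1)) := by ring
        rw [e1] at key
        rw [e2]
        linarith
      calc min x (1 / ((n : ℝ) + 1) - x + 1 / (n : ℝ))
          ≤ (x + (1 / ((n : ℝ) + 1) - x + 1 / (n : ℝ))) / 2 := h1
        _ = (1 / ((n : ℝ) + 1) + 1 / (n : ℝ)) / 2 := by ring
        _ ≤ (2 : ℝ) / ((n : ℝ) + 1) := h2
    unfold gval
    linarith

lemma gfun_formula (n : ℕ) (hn : 0 < n) (x : ℝ) (hx0 : 0 < x) (hx1 : x < 1 / (n : ℝ)) :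
    gfun n x = min x (1 / ((n : ℝ) + 1) - x + 1 / (n : ℝ)) := by
  have hn1 : (1 : ℝ) ≤ (n : ℝ) := by exact_mod_cast hn
  have hnpos : (0 : ℝ) < (n : ℝ) := by linarith
  apply le_antisymm
  · apply le_min
    · have := gfun_le_abs n x
      rwa [abs_of_pos hx0] at this
    · have hmem : n ∈ Icc 1 n := Finset.mem_Icc.mpr ⟨hn, le_rfl⟩
      have h := gfun_le n (fun i => if i = n then 1 else 0) x
      rw [gval_single n n hmem 1 x] at h
      have hxn : |x - (1 : ℝ) / (n : ℝ)| = 1 / (n : ℝ) - x := by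
        rw [abs_of_nonpos (by push_cast; linarith)]; ring
      push_cast at h
      rw [hxn, abs_one] at h
      linarith
  · apply le_csInf (grange_nonempty n x)
    rintro b ⟨m, rfl⟩
    exact gval_key n hn x hx0 hx1 m




/-- `ρ` is a translation-invariant metric on `ℝ`. -/
def IsTIMetric (ρ : ℝ → ℝ → ℝ) : Prop :=
  (∀ x y : ℝ, 0 ≤ ρ x y) ∧ (∀ x y : ℝ, ρ x y = 0 ↔ x = y) ∧
  (∀ x y : ℝ, ρ x y = ρ y x) ∧ (∀ x y z : ℝ, ρ x z ≤ ρ x y + ρ y z) ∧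
  (∀ x y v : ℝ, ρ (x + v) (y + v) = ρ x y)

/-- The family `D` of translation-invariant metrics on `ℝ` with `ρ(0,x) ≤ |x|`. -/
def DFam : Set (ℝ → ℝ → ℝ) := {ρ | IsTIMetric ρ ∧ ∀ x : ℝ, ρ 0 x ≤ |x|}

/-- `δ_n := sup{ρ ∈ D : ρ(1/k) ≤ 1/(k+1) for all k ≤ n}`. -/
noncomputable def deltaSup (n : ℕ) (x y : ℝ) : ℝ :=
  sSup ((fun ρ : ℝ → ℝ → ℝ => ρ x y) ''
    {ρ ∈ DFam | ∀ k : ℕ, 0 < k → k ≤ n → ρ 0 (1 / (k : ℝ)) ≤ 1 / ((k : ℝ) + 1)})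

/-- On `(0, 1/n)` one has `δ_n(x) = min{x, 1/(n+1) − x + 1/n}`; consequently if
`p ∈ (0,1/n)` and `δ_n(p) ≤ 1/(n+1)` then `p ≤ 1/(n+1)`. -/
noncomputable def rhoExt (n : ℕ) : ℝ → ℝ → ℝ := fun a b => gfun n (b - a)

lemma rhoExt_mem (n : ℕ) (hn : 0 < n) :
    rhoExt n ∈ {ρ ∈ DFam | ∀ k : ℕ, 0 < k → k ≤ n →
      ρ 0 (1 / (k : ℝ)) ≤ 1 / ((k : ℝ) + 1)} := by
  have hn1 : (1 : ℝ) ≤ (n : ℝ) := by exact_mod_cast hn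
  constructor
  · constructor
    · refine ⟨fun x y => gfun_nonneg n _, ?_, ?_, ?_, ?_⟩
      · intro x y
        constructor
        · intro h
          by_contra hne
          have hne' : y - x ≠ 0 := fun hc => hne (sub_eq_zero.mp hc).symm
          have hlb := gfun_lb n (y - x)
          have h1 : (0:ℝ) < |y - x| := abs_pos.mpr hne'
          have h2 : (0:ℝ) < 1 / ((n : ℝ) + 1) := by positivity
          have : (0:ℝ) < min |y - x| (1 / ((n : ℝ) + 1)) := lt_min h1 h2
          rw [show rhoExt n x y = gfun n (y - x) from rfl] at h
          linarith
        · intro h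
          subst h
          show gfun n (x - x) = 0
          rw [sub_self]
          have h1 := gfun_le_abs n 0
          rw [abs_zero] at h1
          exact le_antisymm h1 (gfun_nonneg n 0)
      · intro x y
        show gfun n (y - x) = gfun n (x - y)
        rw [show x - y = -(y - x) by ring, gfun_neg]
      · intro x y z
        show gfun n (z - x) ≤ gfun n (y - x) + gfun n (z - y)
        have := gfun_subadd n (y - x) (z - y)
        rwa [show y - x + (z - y) = z - x by ring] at this
      · intro x y v
        show gfun n (y + v - (x + v)) = gfun n (y - x)
        ring_nf
    · intro x
      show gfun n (x - 0) ≤ |x|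
      rw [sub_zero]
      exact gfun_le_abs n x
  · intro k hk1 hkn
    show gfun n (1 / (k : ℝ) - 0) ≤ 1 / ((k : ℝ) + 1)
    rw [sub_zero]
    exact gfun_constraint n k hk1 hkn

theorem deltaSup_formula :
    ∀ n : ℕ, 0 < n →
      (∀ x : ℝ, x ∈ Set.Ioo (0 : ℝ) (1 / (n : ℝ)) →
        deltaSup n 0 x = min x (1 / ((n : ℝ) + 1) - x + 1 / (n : ℝ))) ∧
      (∀ p : ℝ, p ∈ Set.Ioo (0 : ℝ) (1 / (n : ℝ)) →
        deltaSup n 0 p ≤ 1 / ((n : ℝ) + 1) → p ≤ 1 / ((n : ℝ) + 1)) := by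
  intro n hn
  have hn1 : (1 : ℝ) ≤ (n : ℝ) := by exact_mod_cast hn
  have hnpos : (0 : ℝ) < (n : ℝ) := by linarith
  have hform : ∀ x : ℝ, x ∈ Set.Ioo (0 : ℝ) (1 / (n : ℝ)) →
      deltaSup n 0 x = min x (1 / ((n : ℝ) + 1) - x + 1 / (n : ℝ)) := by
    intro x hx
    obtain ⟨hx0, hx1⟩ := hx
    set B := 1 / ((n : ℝ) + 1) - x + 1 / (n : ℝ) with hB
    have hub : ∀ y ∈ (fun ρ : ℝ → ℝ → ℝ => ρ 0 x) ''
        {ρ ∈ DFam | ∀ k : ℕ, 0 < k → k ≤ n → ρ 0 (1 / (k : ℝ)) ≤ 1 / ((k : ℝ) + 1)},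
        y ≤ min x B := by
      rintro y ⟨ρ, ⟨⟨⟨hnn, heq, hsym, htri, htrans⟩, hle⟩, hcons⟩, rfl⟩
      apply le_min
      · have := hle x
        rwa [abs_of_pos hx0] at this
      · have h1 : ρ 0 (1 / (n : ℝ)) ≤ 1 / ((n : ℝ) + 1) := hcons n hn le_rfl
        have h2 : ρ (1 / (n : ℝ)) x = ρ 0 (x - 1 / (n : ℝ)) := by
          have := htrans 0 (x - 1 / (n : ℝ)) (1 / (n : ℝ))
          rw [zero_add, sub_add_cancel] at this
          exact this
        have h3 : ρ 0 (x - 1 / (n : ℝ)) ≤ 1 / (n : ℝ) - x := by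
          have := hle (x - 1 / (n : ℝ))
          rw [abs_of_nonpos (by linarith)] at this
          linarith
        have h4 := htri 0 (1 / (n : ℝ)) x
        rw [h2] at h4
        rw [hB]
        linarith
    have hmem := rhoExt_mem n hn
    have hval : rhoExt n 0 x = min x B := by
      show gfun n (x - 0) = min x B
      rw [sub_zero]
      exact gfun_formula n hn x hx0 hx1
    have hnemp : ((fun ρ : ℝ → ℝ → ℝ => ρ 0 x) ''
        {ρ ∈ DFam | ∀ k : ℕ, 0 < k → k ≤ n →
          ρ 0 (1 / (k : ℝ)) ≤ 1 / ((k : ℝ) + 1)}).Nonempty :=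
      ⟨rhoExt n 0 x, ⟨rhoExt n, hmem, rfl⟩⟩
    apply le_antisymm
    · exact csSup_le hnemp hub
    · rw [← hval]
      exact le_csSup ⟨min x B, hub⟩ ⟨rhoExt n, hmem, rfl⟩
  refine ⟨hform, ?_⟩
  intro p hp hle
  rw [hform p hp] at hle
  obtain ⟨hp0, hp1⟩ := hp
  by_contra hcon
  push_neg at hcon
  have hBgt : 1 / ((n : ℝ) + 1) < 1 / ((n : ℝ) + 1) - p + 1 / (n : ℝ) := by linarith
  rcases min_le_iff.mp hle with h | h
  · linarith
  · linarith
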